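/- Let [U; S₁, S₂] be a commutative pomonoid amalgam such that U has the poextension property and is convex in both S₁ and S₂. Then the amalgam is strongly poembeddable: the canonical maps λᵢ : Sᵢ → S₁ ⊗_U S₂ (λ₁(s₁) = s₁ ⊗ 1, λ₂(s₂) = 1 ⊗ s₂) are order embeddings and λ₁(S₁) ∩ λ₂(S₂) = λ₁(U). -/

import Mathlib

universe u v

/-- A pomonoid: the partial order is compatible with multiplication on both sides. -/
def IsPomonoid (S : Type*) [Monoid S] [PartialOrder S] : Prop :=
  ∀ ⦃a b : S⦄, a ≤ b → ∀ c : S, a * c ≤ b * c ∧ c * a ≤ c * b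

/-- A right `S`-poset structure on `A` given by the action `act`. -/
structure IsRightSPoset (S A : Type*) [Monoid S] [PartialOrder S] [PartialOrder A]
    (act : A → S → A) : Prop where
  act_one : ∀ a, act a 1 = a
  act_mul : ∀ a s t, act a (s * t) = act (act a s) t
  mono_act : ∀ {a b : A} (s : S), a ≤ b → act a s ≤ act b s
  act_mono : ∀ (a : A) {s t : S}, s ≤ t → act a s ≤ act a t

/-- A left `S`-poset structure on `A` given by the action `act`. -/
structure IsLeftSPoset (S A : Type*) [Monoid S] [PartialOrder S] [PartialOrder A]
    (act : S → A → A) : Prop where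
  one_act : ∀ a, act 1 a = a
  mul_act : ∀ s t a, act (s * t) a = act s (act t a)
  mono_act : ∀ {a b : A} (s : S), a ≤ b → act s a ≤ act s b
  act_mono : ∀ (a : A) {s t : S}, s ≤ t → act s a ≤ act t a

/-- The scheme relation defining the order on the tensor product `X ⊗_U Y`, at the level of
representatives: `TLe leX leY aX aY (x, y) (x', y')` holds precisely when there is a finite
scheme `x ≤ x₁s₁`, `s₁y ≤ t₁y₂`, `x₁t₁ ≤ x₂s₂`, `s₂y₂ ≤ t₂y₃`, …, `sₙyₙ ≤ tₙy'`,
`xₙtₙ ≤ x'`. -/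
inductive TLe {U X Y : Type*} (leX : X → X → Prop) (leY : Y → Y → Prop)
    (aX : X → U → X) (aY : U → Y → Y) : X × Y → X × Y → Prop
  | base : ∀ (p q : X × Y) (x₁ : X) (s t : U),
      leX p.1 (aX x₁ s) → leY (aY s p.2) (aY t q.2) → leX (aX x₁ t) q.1 →
      TLe leX leY aX aY p q
  | step : ∀ (p q : X × Y) (x₁ : X) (s t : U) (y₂ : Y),
      leX p.1 (aX x₁ s) → leY (aY s p.2) (aY t y₂) →
      TLe leX leY aX aY (aX x₁ t, y₂) q → TLe leX leY aX aY p q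

/-- Equality of two representatives in the tensor product. -/
def TEquiv {U X Y : Type*} (leX : X → X → Prop) (leY : Y → Y → Prop)
    (aX : X → U → X) (aY : U → Y → Y) (p q : X × Y) : Prop :=
  TLe leX leY aX aY p q ∧ TLe leX leY aX aY q p

/-- The order induced on a quotient by a relation `le` on representatives. -/
def QuotLe {α : Type*} (r : α → α → Prop) (le : α → α → Prop) (x y : Quot r) : Prop :=
  ∃ p q : α, Quot.mk r p = x ∧ Quot.mk r q = y ∧ le p q

/-- `ChainLe le ρ a b` expresses `a ≤ a₁ ρ a₁' ≤ a₂ ρ a₂' ≤ ⋯ ≤ aₙ ρ aₙ' ≤ b`. -/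
inductive ChainLe {F : Type*} (le ρ : F → F → Prop) : F → F → Prop
  | base : ∀ {a b : F}, le a b → ChainLe le ρ a b
  | step : ∀ {a b : F} (d d' : F), le a d → ρ d d' → ChainLe le ρ d' b → ChainLe le ρ a b

/-- The relation `α(R)` induced by `R` on a right `S`-act:
`a α(R) b` iff `a = b` or `a = x₁s₁`, `x₁'s₁ = x₂s₂`, …, `xₙ'sₙ = b` with `(xᵢ, xᵢ') ∈ R`. -/
inductive AlphaRel {S F : Type*} (act : F → S → F) (R : F → F → Prop) : F → F → Prop
  | refl : ∀ a, AlphaRel act R a a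
  | step : ∀ (x x' : F) (s : S) (b : F), R x x' → AlphaRel act R (act x' s) b →
      AlphaRel act R (act x s) b

/-- `U` has the poextension property in `Sᵢ` (along the order-embedding `φ : U →* Sᵢ`): for
every right `U`-poset `X` and left `U`-poset `Y` the canonical map
`X ⊗_U Y → X ⊗_U Sᵢ ⊗_U Y`, `x ⊗ y ↦ x ⊗ 1 ⊗ y`, is an order embedding. -/
def HasPoextension {U Si : Type u} [Monoid U] [Monoid Si] [PartialOrder U] [PartialOrder Si]
    (φ : U →* Si) : Prop :=
  ∀ (X Y : Type u) [PartialOrder X] [PartialOrder Y]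
    (aX : X → U → X) (aY : U → Y → Y),
    IsRightSPoset U X aX → IsLeftSPoset U Y aY →
    ∀ (x x' : X) (y y' : Y),
      QuotLe
          (TEquiv (TLe (· ≤ ·) (· ≤ ·) aX (fun (u : U) (s : Si) => φ u * s))
            (· ≤ ·) (fun (p : X × Si) (u : U) => (p.1, p.2 * φ u)) aY)
          (TLe (TLe (· ≤ ·) (· ≤ ·) aX (fun (u : U) (s : Si) => φ u * s))
            (· ≤ ·) (fun (p : X × Si) (u : U) => (p.1, p.2 * φ u)) aY)
          (Quot.mk _ ((x, (1 : Si)), y)) (Quot.mk _ ((x', (1 : Si)), y')) ↔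
        QuotLe (TEquiv (· ≤ ·) (· ≤ ·) aX aY) (TLe (· ≤ ·) (· ≤ ·) aX aY)
          (Quot.mk _ (x, y)) (Quot.mk _ (x', y'))

namespace Stmt18Aux

section Generic

variable {U X Y : Type*} {leX : X → X → Prop} {leY : Y → Y → Prop}
  {aX : X → U → X} {aY : U → Y → Y}

theorem tle_mono_left
    (hXt : ∀ ⦃x y z : X⦄, leX x y → leX y z → leX x z)
    (hYt : ∀ ⦃x y z : Y⦄, leY x y → leY y z → leY x z)
    (hYm : ∀ (u : U) ⦃y y' : Y⦄, leY y y' → leY (aY u y) (aY u y'))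
    {p q r : X × Y} (h : TLe leX leY aX aY q r) (hx : leX p.1 q.1) (hy : leY p.2 q.2) :
    TLe leX leY aX aY p r := by
  cases h with
  | base _ _ x₁ s t h1 h2 h3 =>
    exact .base _ _ x₁ s t (hXt hx h1) (hYt (hYm s hy) h2) h3
  | step _ _ x₁ s t y₂ h1 h2 h3 =>
    exact .step _ _ x₁ s t y₂ (hXt hx h1) (hYt (hYm s hy) h2) h3

theorem tle_trans
    (hXt : ∀ ⦃x y z : X⦄, leX x y → leX y z → leX x z)
    (hYt : ∀ ⦃x y z : Y⦄, leY x y → leY y z → leY x z)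
    (hYr : ∀ y : Y, leY y y)
    (hYm : ∀ (u : U) ⦃y y' : Y⦄, leY y y' → leY (aY u y) (aY u y'))
    {p q : X × Y} (h : TLe leX leY aX aY p q) :
    ∀ {r : X × Y}, TLe leX leY aX aY q r → TLe leX leY aX aY p r := by
  induction h with
  | base p q x₁ s t h1 h2 h3 =>
    intro r hqr
    refine .step _ _ x₁ s t q.2 h1 h2 ?_
    exact tle_mono_left hXt hYt hYm hqr h3 (hYr q.2)
  | step p q x₁ s t y₂ h1 h2 _ ih =>
    intro r hqr
    exact .step _ _ x₁ s t y₂ h1 h2 (ih hqr)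

theorem tle_refl (e : U) (hXe : ∀ x, aX x e = x) (hXr : ∀ x : X, leX x x)
    (hYr : ∀ y : Y, leY y y) (p : X × Y) : TLe leX leY aX aY p p := by
  refine .base p p p.1 e e ?_ (hYr _) ?_
  · rw [hXe]; exact hXr _
  · rw [hXe]; exact hXr _

theorem tle_eval {P : Type*} (le : P → P → Prop)
    (hPt : ∀ ⦃a b c : P⦄, le a b → le b c → le a c)
    (f : X → Y → P)
    (hfX : ∀ ⦃x x' : X⦄ (y : Y), leX x x' → le (f x y) (f x' y))
    (hfY : ∀ (x : X) ⦃y y' : Y⦄, leY y y' → le (f x y) (f x y'))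
    (hbal : ∀ x u y, f (aX x u) y = f x (aY u y))
    {p q : X × Y} (h : TLe leX leY aX aY p q) : le (f p.1 p.2) (f q.1 q.2) := by
  induction h with
  | base p q x₁ s t h1 h2 h3 =>
    have e1 : le (f p.1 p.2) (f (aX x₁ s) p.2) := hfX _ h1
    rw [hbal] at e1
    have e2 : le (f x₁ (aY s p.2)) (f x₁ (aY t q.2)) := hfY _ h2
    have e3 : le (f x₁ (aY t q.2)) (f q.1 q.2) := by rw [← hbal]; exact hfX _ h3
    exact hPt (hPt e1 e2) e3
  | step p q x₁ s t y₂ h1 h2 _ ih =>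
    have e1 : le (f p.1 p.2) (f (aX x₁ s) p.2) := hfX _ h1
    rw [hbal] at e1
    have e2 : le (f x₁ (aY s p.2)) (f x₁ (aY t y₂)) := hfY _ h2
    have e3 : le (f x₁ (aY t y₂)) (f q.1 q.2) := by rw [← hbal]; exact ih
    exact hPt (hPt e1 e2) e3

end Generic

theorem quot_exact_equiv {α : Type*} {r : α → α → Prop} (hr : Equivalence r) {a b : α}
    (h : Quot.mk r a = Quot.mk r b) : r a b :=
  hr.eqvGen_iff.mp (Quot.eqvGen_exact h)

end Stmt18Aux

namespace Stmt18Aux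

/-- A "slot" element: a position together with a value in `U`. Used to build the
finite chain posets fed to the poextension property. -/
@[ext] structure Slot (U : Type u) : Type u where
  idx : ℕ
  val : U

section SlotSec

variable {U : Type u} [CommMonoid U] [PartialOrder U]

/-- `pb b i` is the "β" of the previous row (`1` at position `0`). -/
def pb (b : ℕ → U) : ℕ → U := fun i => Nat.casesOn i 1 b

omit [PartialOrder U] in
@[simp] theorem pb_zero (b : ℕ → U) : pb b 0 = 1 := rfl
omit [PartialOrder U] in
@[simp] theorem pb_succ (b : ℕ → U) (i : ℕ) : pb b (i + 1) = b i := rfl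

/-- The interpolation chain defining the order on the slot poset. -/
def Interp (a b : ℕ → U) : ℕ → ℕ → U → U → Prop
  | 0, _, x, y => x ≤ y
  | n + 1, i, x, y => ∃ ρ, x ≤ pb b i * ρ ∧ Interp a b n (i + 1) (a i * ρ) y

variable {a b : ℕ → U}

theorem interp_mono_left : ∀ {n i x x' y}, x' ≤ x → Interp a b n i x y → Interp a b n i x' y := by
  intro n
  induction n with
  | zero => intro i x x' y hx h; exact le_trans hx h
  | succ n ih =>
    rintro i x x' y hx ⟨ρ, h1, h2⟩
    exact ⟨ρ, le_trans hx h1, h2⟩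

theorem interp_trans : ∀ {n m i x y z}, Interp a b n i x y → Interp a b m (i + n) y z →
    Interp a b (n + m) i x z := by
  intro n
  induction n with
  | zero =>
    intro m i x y z h1 h2
    rw [Nat.zero_add]
    rw [Nat.add_zero] at h2
    exact interp_mono_left h1 h2
  | succ n ih =>
    rintro m i x y z ⟨ρ, hρ, h1⟩ h2
    rw [show n + 1 + m = (n + m) + 1 from by omega]
    refine ⟨ρ, hρ, ?_⟩
    refine ih h1 ?_
    rw [show i + 1 + n = i + (n + 1) from by omega]
    exact h2

theorem interp_act (hU : IsPomonoid U) (c : U) :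
    ∀ {n i x y}, Interp a b n i x y → Interp a b n i (x * c) (y * c) := by
  intro n
  induction n with
  | zero => intro i x y h; exact (hU h c).1
  | succ n ih =>
    rintro i x y ⟨ρ, h1, h2⟩
    refine ⟨ρ * c, ?_, ?_⟩
    · rw [← mul_assoc]; exact (hU h1 c).1
    · rw [← mul_assoc]; exact ih h2

/-- The order on the slot poset. -/
def SlotLe (a b : ℕ → U) (p q : Slot U) : Prop :=
  ∃ n, q.idx = p.idx + n ∧ Interp a b n p.idx p.val q.val

theorem slotLe_refl (p : Slot U) : SlotLe a b p p := ⟨0, rfl, le_refl _⟩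

theorem slotLe_trans {p q r : Slot U} (h1 : SlotLe a b p q) (h2 : SlotLe a b q r) :
    SlotLe a b p r := by
  obtain ⟨n, hn, hI1⟩ := h1
  obtain ⟨m, hm, hI2⟩ := h2
  refine ⟨n + m, by omega, ?_⟩
  rw [hn] at hI2
  exact interp_trans hI1 hI2

theorem slotLe_antisymm {p q : Slot U} (h1 : SlotLe a b p q) (h2 : SlotLe a b q p) : p = q := by
  obtain ⟨n, hn, hI1⟩ := h1
  obtain ⟨m, hm, hI2⟩ := h2
  have hn0 : n = 0 := by omega
  have hm0 : m = 0 := by omega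
  subst hn0; subst hm0
  ext
  · omega
  · exact le_antisymm hI1 hI2

/-- The right action of `U` on the slot poset. -/
def slotAct : Slot U → U → Slot U := fun p c => ⟨p.idx, p.val * c⟩

/-- The partial order structure on the slot poset. -/
def slotPO (a b : ℕ → U) : PartialOrder (Slot U) where
  le := SlotLe a b
  le_refl := slotLe_refl
  le_trans := fun _ _ _ => slotLe_trans
  le_antisymm := fun _ _ => slotLe_antisymm

theorem interp_decode :
    ∀ (n i : ℕ) (x : U), Interp a b n i x (pb b (i + n)) →
      ∃ ρ : ℕ → U, x ≤ pb b i * ρ i ∧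
        (∀ l, i ≤ l → l < i + n → a l * ρ l ≤ b l * ρ (l + 1)) ∧ ρ (i + n) = 1 := by
  intro n
  induction n with
  | zero =>
    intro i x h
    exact ⟨fun _ => 1, by rw [mul_one]; exact h, fun l h1 h2 => absurd h2 (by omega), rfl⟩
  | succ n ih =>
    rintro i x ⟨ρ₀, h1, h2⟩
    have h2' : Interp a b n (i + 1) (a i * ρ₀) (pb b ((i + 1) + n)) := by
      rw [show (i + 1) + n = i + (n + 1) from by omega]
      exact h2
    obtain ⟨ρ', hr1, hr2, hr3⟩ := ih (i + 1) _ h2'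
    set ρ : ℕ → U := fun l => if l = i then ρ₀ else ρ' l with hρdef
    have hρi : ρ i = ρ₀ := by simp [hρdef]
    have hρne : ∀ l, l ≠ i → ρ l = ρ' l := fun l h => by simp [hρdef, h]
    refine ⟨ρ, ?_, ?_, ?_⟩
    · rw [hρi]; exact h1
    · intro l hl1 hl2
      rcases eq_or_lt_of_le hl1 with h | hlt
      · subst h
        rw [hρi, hρne (i + 1) (by omega)]
        exact hr1
      · rw [hρne l (by omega), hρne (l + 1) (by omega)]
        exact hr2 l (by omega) (by omega)
    · rw [hρne (i + (n + 1)) (by omega), show i + (n + 1) = (i + 1) + n from by omega]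
      exact hr3

end SlotSec

end Stmt18Aux

namespace Stmt18Aux

section CoreSec

variable {U S : Type u} [CommMonoid U] [CommMonoid S] [PartialOrder U] [PartialOrder S]

theorem replay (hS : IsPomonoid S) (φ : U →* S) (a b : ℕ → U) (ys : ℕ → S) :
    ∀ (n i : ℕ), (∀ l, i ≤ l → l < i + n → φ (a l) * ys l ≤ φ (b l) * ys (l + 1)) →
      TLe (SlotLe a b) (· ≤ ·) slotAct (fun (u : U) (m : S) => φ u * m)
        (⟨⟨i, pb b i⟩, ys i⟩) (⟨⟨i + n, pb b (i + n)⟩, ys (i + n)⟩) := by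
  intro n
  induction n with
  | zero =>
    intro i _
    exact tle_refl 1 (fun p => by cases p; simp [slotAct]) slotLe_refl
      (fun y => le_refl y) _
  | succ n ih =>
    intro i hrows
    refine TLe.step _ _ ⟨i + 1, 1⟩ (a i) (b i) (ys (i + 1)) ?_ ?_ ?_
    · -- SlotLe ⟨i, pb b i⟩ (slotAct ⟨i+1,1⟩ (a i))
      refine ⟨1, rfl, ⟨1, by simp, ?_⟩⟩
      show a i * 1 ≤ 1 * a i
      simp
    · exact hrows i (le_refl i) (by omega)
    · have e : slotAct (⟨i + 1, 1⟩ : Slot U) (b i) = (⟨i + 1, pb b (i + 1)⟩ : Slot U) := by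
        simp [slotAct]
      rw [e, show i + (n + 1) = (i + 1) + n from by omega]
      exact ih (i + 1) (fun l h1 h2 => hrows l (by omega) (by omega))

theorem core (hU : IsPomonoid U) (hS : IsPomonoid S) (φ : U →* S) (hpe : HasPoextension φ)
    (a b : ℕ → U) (ys : ℕ → S) (N : ℕ) (h0 : ys 0 = 1) (hN : ys N = 1)
    (hrows : ∀ l, l < N → φ (a l) * ys l ≤ φ (b l) * ys (l + 1)) :
    ∃ ρ : ℕ → U, 1 ≤ ρ 0 ∧ (∀ l, l < N → a l * ρ l ≤ b l * ρ (l + 1)) ∧ ρ N = 1 := by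
  letI instSlot : PartialOrder (Slot U) := slotPO a b
  have hactone : ∀ p : Slot U, slotAct p 1 = p := fun p => by cases p; simp [slotAct]
  have hX : IsRightSPoset U (Slot U) slotAct :=
    { act_one := hactone
      act_mul := fun p s t => by cases p; simp [slotAct, mul_assoc]
      mono_act := fun {p q} s h => by
        obtain ⟨n, hn, hI⟩ := h
        exact ⟨n, hn, interp_act hU s hI⟩
      act_mono := fun p {s t} h => ⟨0, rfl, (hU h p.val).2⟩ }
  have hY : IsLeftSPoset U U (fun u v => u * v) :=
    { one_act := one_mul
      mul_act := mul_assoc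
      mono_act := fun {c d} s h => (hU h s).2
      act_mono := fun c {s t} h => (hU h c).1 }
  have inner : TLe ((· ≤ ·) : Slot U → Slot U → Prop) ((· ≤ ·) : S → S → Prop) slotAct
      (fun (u : U) (m : S) => φ u * m) (⟨⟨0, 1⟩, 1⟩) (⟨⟨N, pb b N⟩, 1⟩) := by
    have h := replay hS φ a b ys N 0 (fun l h1 h2 => hrows l (by omega))
    simp only [Nat.zero_add, pb_zero, h0, hN] at h
    exact h
  have iff1 := hpe (Slot U) U slotAct (fun u v => u * v) hX hY ⟨0, 1⟩ ⟨N, pb b N⟩ 1 1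
  have bigT : TLe (TLe (· ≤ ·) (· ≤ ·) slotAct (fun (u : U) (s : S) => φ u * s)) (· ≤ ·)
      (fun (p : Slot U × S) (u : U) => (p.1, p.2 * φ u)) (fun (u v : U) => u * v)
      ((⟨0, 1⟩, 1), 1) ((⟨N, pb b N⟩, 1), 1) := by
    refine TLe.base _ _ (⟨0, 1⟩, 1) 1 1 ?_ ?_ ?_
    · simp only [map_one, mul_one]
      exact tle_refl 1 (fun p => by cases p; simp [slotAct]) (fun x => le_refl x)
        (fun y => le_refl y) _
    · exact le_refl _
    · simp only [map_one, mul_one]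
      exact inner
  obtain ⟨p, q, hp, hq, hpq⟩ := iff1.mp ⟨((⟨0, 1⟩, 1), 1), ((⟨N, pb b N⟩, 1), 1), rfl, rfl, bigT⟩
  have fmono : ∀ {z w : Slot U × U}, TLe (· ≤ ·) (· ≤ ·) slotAct (fun (u v : U) => u * v) z w →
      SlotLe a b (slotAct z.1 z.2) (slotAct w.1 w.2) := by
    intro z w h
    refine tle_eval (SlotLe a b) (fun {x y z'} h1 h2 => slotLe_trans h1 h2) slotAct ?_ ?_ ?_ h
    · intro x x' y hxx'
      obtain ⟨n, hn, hI⟩ := hxx'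
      exact ⟨n, hn, interp_act hU y hI⟩
    · intro x y y' hyy'
      exact ⟨0, rfl, (hU hyy' x.val).2⟩
    · intro x u y; cases x; simp [slotAct, mul_assoc]
  have fresp : ∀ z w, TEquiv (· ≤ ·) (· ≤ ·) slotAct (fun (u v : U) => u * v) z w →
      slotAct z.1 z.2 = slotAct w.1 w.2 :=
    fun z w hzw => slotLe_antisymm (fmono hzw.1) (fmono hzw.2)
  have hfp : slotAct p.1 p.2 = slotAct ⟨0, 1⟩ 1 :=
    congrArg (Quot.lift (fun z : Slot U × U => slotAct z.1 z.2) fresp) hp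
  have hfq : slotAct q.1 q.2 = slotAct ⟨N, pb b N⟩ 1 :=
    congrArg (Quot.lift (fun z : Slot U × U => slotAct z.1 z.2) fresp) hq
  have hle : SlotLe a b (⟨0, 1⟩ : Slot U) (⟨N, pb b N⟩ : Slot U) := by
    have := fmono hpq
    rw [hfp, hfq, hactone, hactone] at this
    exact this
  obtain ⟨n, hn, hI⟩ := hle
  have hn' : N = 0 + n := hn
  have hIN : Interp a b N 0 1 (pb b (0 + N)) := by
    obtain rfl : n = N := by omega
    rw [Nat.zero_add]
    exact hI
  obtain ⟨ρ, hρ1, hρ2, hρ3⟩ := interp_decode N 0 1 hIN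
  refine ⟨ρ, ?_, ?_, ?_⟩
  · rw [pb_zero, one_mul] at hρ1; exact hρ1
  · intro l hl; exact hρ2 l (by omega) (by omega)
  · rw [Nat.zero_add] at hρ3; exact hρ3

end CoreSec

end Stmt18Aux

namespace Stmt18Aux

section TSec

variable {U S₁ S₂ : Type u} [CommMonoid U] [CommMonoid S₁] [CommMonoid S₂]
  [PartialOrder U] [PartialOrder S₁] [PartialOrder S₂]

/-- The tensor-order relation on representatives of `S₁ ⊗_U S₂`. -/
abbrev RT (φ₁ : U →* S₁) (φ₂ : U →* S₂) : S₁ × S₂ → S₁ × S₂ → Prop :=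
  TLe (· ≤ ·) (· ≤ ·) (fun (s : S₁) (u : U) => s * φ₁ u) (fun (u : U) (t : S₂) => φ₂ u * t)

variable (φ₁ : U →* S₁) (φ₂ : U →* S₂)

theorem extract {p q : S₁ × S₂} (h : RT φ₁ φ₂ p q) :
    ∃ (k : ℕ) (a b : ℕ → U) (xs : ℕ → S₁) (ys : ℕ → S₂),
      0 < k ∧ ys 0 = p.2 ∧ ys k = q.2 ∧
      (∀ l, l < k → φ₂ (a l) * ys l ≤ φ₂ (b l) * ys (l + 1)) ∧
      p.1 ≤ xs 0 * φ₁ (a 0) ∧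
      (∀ l, l + 1 < k → xs l * φ₁ (b l) ≤ xs (l + 1) * φ₁ (a (l + 1))) ∧
      xs (k - 1) * φ₁ (b (k - 1)) ≤ q.1 := by
  induction h with
  | base p q x₁ s t h1 h2 h3 =>
    refine ⟨1, fun _ => s, fun _ => t, fun _ => x₁,
      fun l => Nat.casesOn l p.2 (fun _ => q.2), Nat.one_pos, rfl, rfl, ?_, h1, ?_, h3⟩
    · intro l hl
      obtain rfl : l = 0 := by omega
      exact h2
    · intro l hl; omega
  | step p q x₁ s t y₂ h1 h2 h3 ih =>
    obtain ⟨k, a, b, xs, ys, hk, hy0, hyk, hrows, hx0, hxs, hxl⟩ := ih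
    obtain ⟨m, rfl⟩ : ∃ m, k = m + 1 := ⟨k - 1, by omega⟩
    refine ⟨m + 2, fun l => Nat.casesOn l s a, fun l => Nat.casesOn l t b,
      fun l => Nat.casesOn l x₁ xs, fun l => Nat.casesOn l p.2 ys,
      by omega, rfl, hyk, ?_, h1, ?_, by exact hxl⟩
    · intro l hl
      cases l with
      | zero =>
        show φ₂ s * p.2 ≤ φ₂ t * ys 0
        rw [hy0]
        exact h2
      | succ l => exact hrows l (by omega)
    · intro l hl
      cases l with
      | zero => exact hx0
      | succ l => exact hxs l (by omega)

theorem rebuildUp (hU : IsPomonoid U) (hS₁ : IsPomonoid S₁)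
    (hφ₁ : ∀ u u' : U, u ≤ u' ↔ φ₁ u ≤ φ₁ u')
    {s x' : S₁} {k : ℕ} (hk : 0 < k) {a b : ℕ → U} {xs : ℕ → S₁} {ρ : ℕ → U}
    (hρ0 : 1 ≤ ρ 0) (hρ : ∀ l, l < k → a l * ρ l ≤ b l * ρ (l + 1))
    (hx0 : s ≤ xs 0 * φ₁ (a 0))
    (hxs : ∀ l, l + 1 < k → xs l * φ₁ (b l) ≤ xs (l + 1) * φ₁ (a (l + 1)))
    (hxl : xs (k - 1) * φ₁ (b (k - 1)) ≤ x') :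
    s ≤ x' * φ₁ (ρ k) := by
  obtain ⟨m, rfl⟩ : ∃ m, k = m + 1 := ⟨k - 1, by omega⟩
  have main : ∀ l, l < m + 1 → s ≤ xs l * φ₁ (a l * ρ l) := by
    intro l
    induction l with
    | zero =>
      intro _
      refine le_trans hx0 ?_
      have h1 : a 0 ≤ a 0 * ρ 0 := by
        have := (hU hρ0 (a 0)).2
        rwa [mul_one] at this
      exact (hS₁ ((hφ₁ _ _).mp h1) (xs 0)).2
    | succ l ihl =>
      intro hl
      refine le_trans (ihl (by omega)) ?_
      calc xs l * φ₁ (a l * ρ l) ≤ xs l * φ₁ (b l * ρ (l + 1)) :=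
            (hS₁ ((hφ₁ _ _).mp (hρ l (by omega))) (xs l)).2
        _ = (xs l * φ₁ (b l)) * φ₁ (ρ (l + 1)) := by rw [map_mul, mul_assoc]
        _ ≤ (xs (l + 1) * φ₁ (a (l + 1))) * φ₁ (ρ (l + 1)) := (hS₁ (hxs l hl) _).1
        _ = xs (l + 1) * φ₁ (a (l + 1) * ρ (l + 1)) := by rw [map_mul, mul_assoc]
  refine le_trans (main m (by omega)) ?_
  calc xs m * φ₁ (a m * ρ m) ≤ xs m * φ₁ (b m * ρ (m + 1)) :=
        (hS₁ ((hφ₁ _ _).mp (hρ m (by omega))) (xs m)).2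
    _ = (xs m * φ₁ (b m)) * φ₁ (ρ (m + 1)) := by rw [map_mul, mul_assoc]
    _ ≤ x' * φ₁ (ρ (m + 1)) := (hS₁ hxl _).1

theorem rebuildDown (hU : IsPomonoid U) (hS₁ : IsPomonoid S₁)
    (hφ₁ : ∀ u u' : U, u ≤ u' ↔ φ₁ u ≤ φ₁ u')
    {s : S₁} (k₁ : ℕ) {k₂ : ℕ} (hk₂ : 0 < k₂)
    {a b : ℕ → U} {xs : ℕ → S₁} {ρ : ℕ → U}
    (hρ : ∀ l, l < k₂ → a l * ρ (k₁ + l) ≤ b l * ρ (k₁ + l + 1))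
    (hlast : ρ (k₁ + k₂) = 1)
    (hx0 : (1 : S₁) ≤ xs 0 * φ₁ (a 0))
    (hxs : ∀ l, l + 1 < k₂ → xs l * φ₁ (b l) ≤ xs (l + 1) * φ₁ (a (l + 1)))
    (hxl : xs (k₂ - 1) * φ₁ (b (k₂ - 1)) ≤ s) :
    φ₁ (ρ k₁) ≤ s := by
  obtain ⟨m, rfl⟩ : ∃ m, k₂ = m + 1 := ⟨k₂ - 1, by omega⟩
  have main : ∀ l, l < m + 1 → φ₁ (ρ k₁) ≤ xs l * φ₁ (a l * ρ (k₁ + l)) := by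
    intro l
    induction l with
    | zero =>
      intro _
      have h1 : (1 : S₁) * φ₁ (ρ k₁) ≤ (xs 0 * φ₁ (a 0)) * φ₁ (ρ k₁) := (hS₁ hx0 _).1
      rw [one_mul] at h1
      refine le_trans h1 ?_
      rw [mul_assoc, ← map_mul]
      exact le_refl _
    | succ l ihl =>
      intro hl
      refine le_trans (ihl (by omega)) ?_
      calc xs l * φ₁ (a l * ρ (k₁ + l)) ≤ xs l * φ₁ (b l * ρ (k₁ + l + 1)) :=
            (hS₁ ((hφ₁ _ _).mp (hρ l (by omega))) _).2
        _ = (xs l * φ₁ (b l)) * φ₁ (ρ (k₁ + l + 1)) := by rw [map_mul, mul_assoc]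
        _ ≤ (xs (l + 1) * φ₁ (a (l + 1))) * φ₁ (ρ (k₁ + l + 1)) := (hS₁ (hxs l hl) _).1
        _ = xs (l + 1) * φ₁ (a (l + 1) * ρ (k₁ + l + 1)) := by rw [map_mul, mul_assoc]
  refine le_trans (main m (by omega)) ?_
  calc xs m * φ₁ (a m * ρ (k₁ + m)) ≤ xs m * φ₁ (b m * ρ (k₁ + m + 1)) :=
        (hS₁ ((hφ₁ _ _).mp (hρ m (by omega))) _).2
    _ = xs m * φ₁ (b m) := by
        rw [show ρ (k₁ + m + 1) = 1 from hlast, mul_one]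
    _ ≤ s := hxl

theorem rebuildMid (hU : IsPomonoid U) (hS₂ : IsPomonoid S₂)
    (hφ₂ : ∀ u u' : U, u ≤ u' ↔ φ₂ u ≤ φ₂ u')
    {t t' : S₂} (m : ℕ) {a b : ℕ → U} {ys : ℕ → S₂} {ρ : ℕ → U}
    (hy0 : ys 0 = t) (hyk : ys (m + 1) = t')
    (hrows : ∀ l, l < m + 1 → φ₂ (a l) * ys l ≤ φ₂ (b l) * ys (l + 1))
    (h0 : 1 ≤ ρ 0) (r0 : ρ 0 ≤ a 0 * ρ 1)
    (rmid : ∀ j, j + 1 < m + 1 → b j * ρ (j + 1) ≤ a (j + 1) * ρ (j + 2))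
    (rlast : b m * ρ (m + 1) ≤ 1) : t ≤ t' := by
  have shuffle : ∀ (x y : U) (z : S₂), φ₂ (x * y) * z = φ₂ y * (φ₂ x * z) := by
    intro x y z
    rw [map_mul, ← mul_assoc, mul_comm (φ₂ x) (φ₂ y), mul_assoc]
  have main : ∀ l, l < m + 1 → t ≤ φ₂ (a l * ρ (l + 1)) * ys l := by
    intro l
    induction l with
    | zero =>
      intro _
      have e1 : t ≤ φ₂ (ρ 0) * t := by
        have := (hS₂ ((hφ₂ _ _).mp h0) t).1
        rwa [map_one, one_mul] at this
      refine le_trans e1 ?_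
      rw [hy0]
      exact (hS₂ ((hφ₂ _ _).mp r0) t).1
    | succ l ihl =>
      intro hl
      refine le_trans (ihl (by omega)) ?_
      calc φ₂ (a l * ρ (l + 1)) * ys l = φ₂ (ρ (l + 1)) * (φ₂ (a l) * ys l) := shuffle _ _ _
        _ ≤ φ₂ (ρ (l + 1)) * (φ₂ (b l) * ys (l + 1)) := (hS₂ (hrows l (by omega)) _).2
        _ = φ₂ (b l * ρ (l + 1)) * ys (l + 1) := (shuffle _ _ _).symm
        _ ≤ φ₂ (a (l + 1) * ρ (l + 2)) * ys (l + 1) := (hS₂ ((hφ₂ _ _).mp (rmid l hl)) _).1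
  refine le_trans (main m (by omega)) ?_
  calc φ₂ (a m * ρ (m + 1)) * ys m = φ₂ (ρ (m + 1)) * (φ₂ (a m) * ys m) := shuffle _ _ _
    _ ≤ φ₂ (ρ (m + 1)) * (φ₂ (b m) * ys (m + 1)) := (hS₂ (hrows m (by omega)) _).2
    _ = φ₂ (b m * ρ (m + 1)) * ys (m + 1) := (shuffle _ _ _).symm
    _ ≤ φ₂ 1 * ys (m + 1) := (hS₂ ((hφ₂ _ _).mp rlast) _).1
    _ = t' := by rw [map_one, one_mul, hyk]

end TSec

end Stmt18Aux

namespace Stmt18Aux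

section EmbSec

variable {U S₁ S₂ : Type u} [CommMonoid U] [CommMonoid S₁] [CommMonoid S₂]
  [PartialOrder U] [PartialOrder S₁] [PartialOrder S₂]
  (φ₁ : U →* S₁) (φ₂ : U →* S₂)

theorem emb₁ (hU : IsPomonoid U) (hS₁ : IsPomonoid S₁) (hS₂ : IsPomonoid S₂)
    (hφ₁ : ∀ u u' : U, u ≤ u' ↔ φ₁ u ≤ φ₁ u') (hpe₂ : HasPoextension φ₂)
    {s s' : S₁} (h : RT φ₁ φ₂ (s, 1) (s', 1)) : s ≤ s' := by
  obtain ⟨k, a, b, xs, ys, hk, hy0, hyk, hrows, hx0, hxs, hxl⟩ := extract φ₁ φ₂ h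
  obtain ⟨ρ, hρ0, hρ, hρl⟩ := core hU hS₂ φ₂ hpe₂ a b ys k hy0 hyk hrows
  have main := rebuildUp φ₁ hU hS₁ hφ₁ hk hρ0 hρ hx0 hxs hxl
  rw [hρl, map_one, mul_one] at main
  exact main

theorem emb₂ (hU : IsPomonoid U) (hS₁ : IsPomonoid S₁) (hS₂ : IsPomonoid S₂)
    (hφ₂ : ∀ u u' : U, u ≤ u' ↔ φ₂ u ≤ φ₂ u') (hpe₁ : HasPoextension φ₁)
    {t t' : S₂} (h : RT φ₁ φ₂ ((1 : S₁), t) (1, t')) : t ≤ t' := by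
  obtain ⟨k, a, b, xs, ys, hk, hy0, hyk, hrows, hx0, hxs, hxl⟩ := extract φ₁ φ₂ h
  obtain ⟨m, rfl⟩ : ∃ m, k = m + 1 := ⟨k - 1, by omega⟩
  set A : ℕ → U := fun l => Nat.casesOn l 1 b with hA
  set B : ℕ → U := fun l => if l = m + 1 then 1 else a l with hB
  set YS : ℕ → S₁ := fun l => Nat.casesOn l 1 (fun j => if j = m + 1 then 1 else xs j) with hYS
  have hYS0 : YS 0 = 1 := rfl
  have hYSlast : YS (m + 2) = 1 := by
    show (if m + 1 = m + 1 then (1 : S₁) else xs (m + 1)) = 1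
    rw [if_pos rfl]
  have hrows' : ∀ l, l < m + 2 → φ₁ (A l) * YS l ≤ φ₁ (B l) * YS (l + 1) := by
    intro l hl
    cases l with
    | zero =>
      have hB0 : B 0 = a 0 := by
        show (if 0 = m + 1 then (1 : U) else a 0) = a 0
        rw [if_neg (by omega)]
      have hYS1 : YS 1 = xs 0 := by
        show (if 0 = m + 1 then (1 : S₁) else xs 0) = xs 0
        rw [if_neg (by omega)]
      show φ₁ (A 0) * YS 0 ≤ φ₁ (B 0) * YS 1
      rw [hB0, hYS1]
      show φ₁ 1 * 1 ≤ φ₁ (a 0) * xs 0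
      rw [map_one, one_mul]
      calc (1 : S₁) ≤ xs 0 * φ₁ (a 0) := hx0
        _ = φ₁ (a 0) * xs 0 := mul_comm _ _
    | succ j =>
      by_cases hj : j = m
      · subst hj
        have e1 : B (j + 1) = 1 := by
          show (if j + 1 = j + 1 then (1 : U) else a (j + 1)) = 1
          rw [if_pos rfl]
        have e2 : YS (j + 1) = xs j := by
          show (if j = j + 1 then (1 : S₁) else xs j) = xs j
          rw [if_neg (by omega)]
        have e3 : YS (j + 2) = 1 := by
          show (if j + 1 = j + 1 then (1 : S₁) else xs (j + 1)) = 1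
          rw [if_pos rfl]
        show φ₁ (A (j + 1)) * YS (j + 1) ≤ φ₁ (B (j + 1)) * YS (j + 2)
        rw [e1, e2, e3, map_one, one_mul]
        calc φ₁ (b j) * xs j = xs j * φ₁ (b j) := mul_comm _ _
          _ ≤ 1 := hxl
      · have e1 : B (j + 1) = a (j + 1) := by
          show (if j + 1 = m + 1 then (1 : U) else a (j + 1)) = a (j + 1)
          rw [if_neg (by omega)]
        have e2 : YS (j + 1) = xs j := by
          show (if j = m + 1 then (1 : S₁) else xs j) = xs j
          rw [if_neg (by omega)]
        have e3 : YS (j + 2) = xs (j + 1) := by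
          show (if j + 1 = m + 1 then (1 : S₁) else xs (j + 1)) = xs (j + 1)
          rw [if_neg (by omega)]
        show φ₁ (A (j + 1)) * YS (j + 1) ≤ φ₁ (B (j + 1)) * YS (j + 2)
        rw [e1, e2, e3]
        calc φ₁ (b j) * xs j = xs j * φ₁ (b j) := mul_comm _ _
          _ ≤ xs (j + 1) * φ₁ (a (j + 1)) := hxs j (by omega)
          _ = φ₁ (a (j + 1)) * xs (j + 1) := mul_comm _ _
  obtain ⟨ρ, hρ0, hρ, hρl⟩ := core hU hS₁ φ₁ hpe₁ A B YS (m + 2) hYS0 hYSlast hrows'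
  have r0 : ρ 0 ≤ a 0 * ρ 1 := by
    have h' := hρ 0 (by omega)
    rw [show B 0 = a 0 from by
      show (if 0 = m + 1 then (1 : U) else a 0) = a 0
      rw [if_neg (by omega)]] at h'
    calc ρ 0 = 1 * ρ 0 := (one_mul _).symm
      _ ≤ a 0 * ρ 1 := h'
  have rmid : ∀ j, j + 1 < m + 1 → b j * ρ (j + 1) ≤ a (j + 1) * ρ (j + 2) := by
    intro j hj
    have h' := hρ (j + 1) (by omega)
    rwa [show B (j + 1) = a (j + 1) from by
      show (if j + 1 = m + 1 then (1 : U) else a (j + 1)) = a (j + 1)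
      rw [if_neg (by omega)]] at h'
  have rlast : b m * ρ (m + 1) ≤ 1 := by
    have h' := hρ (m + 1) (by omega)
    rw [show B (m + 1) = 1 from by
        show (if m + 1 = m + 1 then (1 : U) else a (m + 1)) = 1
        rw [if_pos rfl],
      one_mul, show ρ (m + 1 + 1) = 1 from hρl] at h'
    exact h'
  exact rebuildMid φ₂ hU hS₂ hφ₂ m hy0 hyk hrows hρ0 r0 rmid rlast

theorem tle_trans_T (hS₂ : IsPomonoid S₂) {p q r : S₁ × S₂}
    (h1 : RT φ₁ φ₂ p q) (h2 : RT φ₁ φ₂ q r) : RT φ₁ φ₂ p r := by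
  refine tle_trans ?_ ?_ ?_ ?_ h1 h2
  · exact fun x y z ha hb => le_trans ha hb
  · exact fun x y z ha hb => le_trans ha hb
  · exact fun y => le_refl y
  · exact fun u y y' hyy' => (hS₂ hyy' (φ₂ u)).2

theorem tle_refl_T (p : S₁ × S₂) : RT φ₁ φ₂ p p := by
  refine tle_refl 1 ?_ ?_ ?_ p
  · exact fun x => by simp
  · exact fun x => le_refl x
  · exact fun y => le_refl y

theorem main₄ (hU : IsPomonoid U) (hS₁ : IsPomonoid S₁) (hS₂ : IsPomonoid S₂)
    (hφ₁ : ∀ u u' : U, u ≤ u' ↔ φ₁ u ≤ φ₁ u') (hφ₂ : ∀ u u' : U, u ≤ u' ↔ φ₂ u ≤ φ₂ u')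
    (hpe₁ : HasPoextension φ₁) (hpe₂ : HasPoextension φ₂)
    {s : S₁} {t : S₂}
    (h₁ : RT φ₁ φ₂ (s, 1) (1, t)) (h₂ : RT φ₁ φ₂ ((1 : S₁), t) (s, 1)) :
    ∃ u : U, s = φ₁ u ∧ t = φ₂ u := by
  obtain ⟨k₁, a₁, b₁, xs₁, ys₁, hk₁, hy₁0, hy₁k, hrows₁, hx₁0, hxs₁, hxl₁⟩ := extract φ₁ φ₂ h₁
  obtain ⟨k₂, a₂, b₂, xs₂, ys₂, hk₂, hy₂0, hy₂k, hrows₂, hx₂0, hxs₂, hxl₂⟩ := extract φ₁ φ₂ h₂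
  set A : ℕ → U := fun l => if l < k₁ then a₁ l else a₂ (l - k₁) with hA
  set B : ℕ → U := fun l => if l < k₁ then b₁ l else b₂ (l - k₁) with hB
  set YS : ℕ → S₂ := fun l => if l < k₁ then ys₁ l else ys₂ (l - k₁) with hYS
  have eYS : ∀ l, l < k₁ → YS l = ys₁ l := by
    intro l hl
    show (if l < k₁ then ys₁ l else ys₂ (l - k₁)) = ys₁ l
    rw [if_pos hl]
  have eYS' : ∀ l, ¬ l < k₁ → YS l = ys₂ (l - k₁) := by
    intro l hl
    show (if l < k₁ then ys₁ l else ys₂ (l - k₁)) = ys₂ (l - k₁)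
    rw [if_neg hl]
  have eA : ∀ l, l < k₁ → A l = a₁ l := by
    intro l hl
    show (if l < k₁ then a₁ l else a₂ (l - k₁)) = a₁ l
    rw [if_pos hl]
  have eA' : ∀ l, ¬ l < k₁ → A l = a₂ (l - k₁) := by
    intro l hl
    show (if l < k₁ then a₁ l else a₂ (l - k₁)) = a₂ (l - k₁)
    rw [if_neg hl]
  have eB : ∀ l, l < k₁ → B l = b₁ l := by
    intro l hl
    show (if l < k₁ then b₁ l else b₂ (l - k₁)) = b₁ l
    rw [if_pos hl]
  have eB' : ∀ l, ¬ l < k₁ → B l = b₂ (l - k₁) := by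
    intro l hl
    show (if l < k₁ then b₁ l else b₂ (l - k₁)) = b₂ (l - k₁)
    rw [if_neg hl]
  have hYS0 : YS 0 = 1 := by
    rw [eYS 0 hk₁, hy₁0]
  have hYSN : YS (k₁ + k₂) = 1 := by
    rw [eYS' (k₁ + k₂) (by omega), show k₁ + k₂ - k₁ = k₂ from by omega, hy₂k]
  have hrows : ∀ l, l < k₁ + k₂ → φ₂ (A l) * YS l ≤ φ₂ (B l) * YS (l + 1) := by
    intro l hl
    by_cases hlk : l < k₁
    · rw [eA l hlk, eB l hlk, eYS l hlk]
      by_cases hlk1 : l + 1 < k₁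
      · rw [eYS (l + 1) hlk1]
        exact hrows₁ l hlk
      · have hl1 : l + 1 = k₁ := by omega
        have e : YS (l + 1) = ys₁ (l + 1) := by
          rw [eYS' (l + 1) (by omega), show l + 1 - k₁ = 0 from by omega, hy₂0, hl1, hy₁k]
        rw [e]
        exact hrows₁ l hlk
    · rw [eA' l hlk, eB' l hlk, eYS' l hlk,
        eYS' (l + 1) (by omega), show l + 1 - k₁ = (l - k₁) + 1 from by omega]
      exact hrows₂ (l - k₁) (by omega)
  obtain ⟨ρ, hρ0, hρ, hρN⟩ := core hU hS₂ φ₂ hpe₂ A B YS (k₁ + k₂) hYS0 hYSN hrows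
  have hρ₁ : ∀ l, l < k₁ → a₁ l * ρ l ≤ b₁ l * ρ (l + 1) := by
    intro l hl
    have h' := hρ l (by omega)
    rwa [eA l hl, eB l hl] at h'
  have up : s ≤ 1 * φ₁ (ρ k₁) := rebuildUp φ₁ hU hS₁ hφ₁ hk₁ hρ0 hρ₁ hx₁0 hxs₁ hxl₁
  rw [one_mul] at up
  have hρ₂ : ∀ l, l < k₂ → a₂ l * ρ (k₁ + l) ≤ b₂ l * ρ (k₁ + l + 1) := by
    intro l hl
    have h' := hρ (k₁ + l) (by omega)
    rwa [show A (k₁ + l) = a₂ l from by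
        rw [eA' (k₁ + l) (by omega), show k₁ + l - k₁ = l from by omega],
      show B (k₁ + l) = b₂ l from by
        rw [eB' (k₁ + l) (by omega), show k₁ + l - k₁ = l from by omega]] at h'
  have down : φ₁ (ρ k₁) ≤ s := rebuildDown φ₁ hU hS₁ hφ₁ k₁ hk₂ hρ₂ hρN hx₂0 hxs₂ hxl₂
  have hs : s = φ₁ (ρ k₁) := le_antisymm up down
  refine ⟨ρ k₁, hs, ?_⟩
  have move1 : RT φ₁ φ₂ ((1 : S₁), φ₂ (ρ k₁)) (φ₁ (ρ k₁), 1) := by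
    refine TLe.base _ _ 1 1 (ρ k₁) ?_ ?_ ?_
    · show (1 : S₁) ≤ 1 * φ₁ 1
      simp
    · show φ₂ 1 * φ₂ (ρ k₁) ≤ φ₂ (ρ k₁) * 1
      simp
    · show (1 : S₁) * φ₁ (ρ k₁) ≤ φ₁ (ρ k₁)
      simp
  have move2 : RT φ₁ φ₂ (φ₁ (ρ k₁), 1) ((1 : S₁), φ₂ (ρ k₁)) := by
    refine TLe.base _ _ 1 (ρ k₁) 1 ?_ ?_ ?_
    · show φ₁ (ρ k₁) ≤ 1 * φ₁ (ρ k₁)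
      simp
    · show φ₂ (ρ k₁) * 1 ≤ φ₂ 1 * φ₂ (ρ k₁)
      simp
    · show (1 : S₁) * φ₁ 1 ≤ 1
      simp
  have h₁' : RT φ₁ φ₂ (φ₁ (ρ k₁), 1) ((1 : S₁), t) := by rw [← hs]; exact h₁
  have h₂' : RT φ₁ φ₂ ((1 : S₁), t) (φ₁ (ρ k₁), 1) := by rw [← hs]; exact h₂
  have e1 : RT φ₁ φ₂ ((1 : S₁), φ₂ (ρ k₁)) ((1 : S₁), t) := tle_trans_T φ₁ φ₂ hS₂ move1 h₁'
  have e2 : RT φ₁ φ₂ ((1 : S₁), t) ((1 : S₁), φ₂ (ρ k₁)) := tle_trans_T φ₁ φ₂ hS₂ h₂' move2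
  exact le_antisymm (emb₂ φ₁ φ₂ hU hS₁ hS₂ hφ₂ hpe₁ e2) (emb₂ φ₁ φ₂ hU hS₁ hS₂ hφ₂ hpe₁ e1)

end EmbSec

end Stmt18Aux

/-- a commutative pomonoid amalgam [U; S₁, S₂] in which U has the poextension
property and is convex in both S₁ and S₂ is strongly poembeddable in its amalgamated free
product S₁ ⊗_U S₂: the canonical maps λ₁(s) = s ⊗ 1 and λ₂(s) = 1 ⊗ s are order embeddings,
they agree on U, and λ₁(S₁) ∩ λ₂(S₂) = λ₁(U). -/
theorem stmt_18 {U S₁ S₂ : Type u} [CommMonoid U] [CommMonoid S₁] [CommMonoid S₂]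
    [PartialOrder U] [PartialOrder S₁] [PartialOrder S₂]
    (hU : IsPomonoid U) (hS₁ : IsPomonoid S₁) (hS₂ : IsPomonoid S₂)
    (φ₁ : U →* S₁) (φ₂ : U →* S₂)
    (hφ₁ : ∀ u u' : U, u ≤ u' ↔ φ₁ u ≤ φ₁ u') (hφ₂ : ∀ u u' : U, u ≤ u' ↔ φ₂ u ≤ φ₂ u')
    (hpe₁ : HasPoextension φ₁) (hpe₂ : HasPoextension φ₂)
    (hconv₁ : ∀ (u v : U) (s : S₁), φ₁ u ≤ s → s ≤ φ₁ v → s ∈ Set.range φ₁)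
    (hconv₂ : ∀ (u v : U) (s : S₂), φ₂ u ≤ s → s ≤ φ₂ v → s ∈ Set.range φ₂) :
    -- λ₁ is an order embedding into S₁ ⊗_U S₂
    (∀ s s' : S₁,
      QuotLe (TEquiv (· ≤ ·) (· ≤ ·) (fun (s : S₁) (u : U) => s * φ₁ u)
          (fun (u : U) (t : S₂) => φ₂ u * t))
        (TLe (· ≤ ·) (· ≤ ·) (fun (s : S₁) (u : U) => s * φ₁ u)
          (fun (u : U) (t : S₂) => φ₂ u * t))
        (Quot.mk _ (s, (1 : S₂))) (Quot.mk _ (s', (1 : S₂))) ↔ s ≤ s') ∧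
    -- λ₂ is an order embedding into S₁ ⊗_U S₂
    (∀ t t' : S₂,
      QuotLe (TEquiv (· ≤ ·) (· ≤ ·) (fun (s : S₁) (u : U) => s * φ₁ u)
          (fun (u : U) (t : S₂) => φ₂ u * t))
        (TLe (· ≤ ·) (· ≤ ·) (fun (s : S₁) (u : U) => s * φ₁ u)
          (fun (u : U) (t : S₂) => φ₂ u * t))
        (Quot.mk _ ((1 : S₁), t)) (Quot.mk _ ((1 : S₁), t')) ↔ t ≤ t') ∧
    -- λ₁ and λ₂ agree on U
    (∀ u : U,
      (Quot.mk (TEquiv (· ≤ ·) (· ≤ ·) (fun (s : S₁) (u : U) => s * φ₁ u)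
          (fun (u : U) (t : S₂) => φ₂ u * t)) (φ₁ u, (1 : S₂))) =
        Quot.mk _ ((1 : S₁), φ₂ u)) ∧
    -- the amalgam is strongly poembeddable: λ₁(S₁) ∩ λ₂(S₂) = λ₁(U)
    (∀ (s : S₁) (t : S₂),
      (Quot.mk (TEquiv (· ≤ ·) (· ≤ ·) (fun (s : S₁) (u : U) => s * φ₁ u)
          (fun (u : U) (t : S₂) => φ₂ u * t)) (s, (1 : S₂))) =
        Quot.mk _ ((1 : S₁), t) →
      ∃ u : U, s = φ₁ u ∧ t = φ₂ u) := by
  have httrans : ∀ {p q r : S₁ × S₂}, Stmt18Aux.RT φ₁ φ₂ p q → Stmt18Aux.RT φ₁ φ₂ q r →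
      Stmt18Aux.RT φ₁ φ₂ p r :=
    fun h1 h2 => Stmt18Aux.tle_trans_T φ₁ φ₂ hS₂ h1 h2
  have hrefl := Stmt18Aux.tle_refl_T φ₁ φ₂
  have hEq : Equivalence (TEquiv (· ≤ ·) (· ≤ ·) (fun (s : S₁) (u : U) => s * φ₁ u)
      (fun (u : U) (t : S₂) => φ₂ u * t)) :=
    ⟨fun p => ⟨hrefl p, hrefl p⟩, fun h => ⟨h.2, h.1⟩,
     fun h1 h2 => ⟨httrans h1.1 h2.1, httrans h2.2 h1.2⟩⟩
  refine ⟨?_, ?_, ?_, ?_⟩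
  · intro s s'
    constructor
    · rintro ⟨p, q, hp, hq, hpq⟩
      have e1 := Stmt18Aux.quot_exact_equiv hEq hp
      have e2 := Stmt18Aux.quot_exact_equiv hEq hq
      exact Stmt18Aux.emb₁ φ₁ φ₂ hU hS₁ hS₂ hφ₁ hpe₂ (httrans (httrans e1.2 hpq) e2.1)
    · intro hss'
      refine ⟨(s, 1), (s', 1), rfl, rfl, ?_⟩
      refine TLe.base _ _ s' 1 1 ?_ ?_ ?_
      · show s ≤ s' * φ₁ 1
        simpa using hss'
      · exact le_refl _
      · show s' * φ₁ 1 ≤ s'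
        simp
  · intro t t'
    constructor
    · rintro ⟨p, q, hp, hq, hpq⟩
      have e1 := Stmt18Aux.quot_exact_equiv hEq hp
      have e2 := Stmt18Aux.quot_exact_equiv hEq hq
      exact Stmt18Aux.emb₂ φ₁ φ₂ hU hS₁ hS₂ hφ₂ hpe₁ (httrans (httrans e1.2 hpq) e2.1)
    · intro htt'
      refine ⟨((1 : S₁), t), ((1 : S₁), t'), rfl, rfl, ?_⟩
      refine TLe.base _ _ 1 1 1 ?_ ?_ ?_
      · show (1 : S₁) ≤ 1 * φ₁ 1
        simp
      · show φ₂ 1 * t ≤ φ₂ 1 * t'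
        exact (hS₂ htt' (φ₂ 1)).2
      · show (1 : S₁) * φ₁ 1 ≤ 1
        simp
  · intro u
    apply Quot.sound
    constructor
    · refine TLe.base _ _ 1 u 1 ?_ ?_ ?_
      · show φ₁ u ≤ 1 * φ₁ u
        simp
      · show φ₂ u * 1 ≤ φ₂ 1 * φ₂ u
        simp
      · show (1 : S₁) * φ₁ 1 ≤ 1
        simp
    · refine TLe.base _ _ 1 1 u ?_ ?_ ?_
      · show (1 : S₁) ≤ 1 * φ₁ 1
        simp
      · show φ₂ 1 * φ₂ u ≤ φ₂ u * 1
        simp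
      · show (1 : S₁) * φ₁ u ≤ φ₁ u
        simp
  · intro s t h
    have e := Stmt18Aux.quot_exact_equiv hEq h
    exact Stmt18Aux.main₄ φ₁ φ₂ hU hS₁ hS₂ hφ₁ hφ₂ hpe₁ hpe₂ e.1 e.2
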